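/- Let U be the bond scattering matrix of a finite graph G with m edges. Then for |u| sufficiently small, det(I_{2m} - u·U) = ∏_{[C]} (1 - w_C·u^{|C|}), where [C] ranges over all equivalence classes of prime cycles in G and w_C = σ_{e₁e₂}·σ_{e₂e₃}⋯σ_{e_k e₁} is the product of the scattering amplitudes along the cycle C = (e₁,…,e_k). -/

import Mathlib

open Matrix

/-- A cycle in a graph with arc set `A`, origin `o` and terminus `t`,
represented by a periodic sequence of composable arcs. -/
structure GraphCycle {V A : Type*} (o t : A → V) where
  len : ℕ
  pos : 0 < len
  arcs : ℕ → A
  periodic : ∀ i, arcs (i + len) = arcs i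
  closed : ∀ i, t (arcs i) = o (arcs (i + 1))

/-- A cycle is prime if it is not a power of a strictly smaller cycle, i.e.
its minimal positive period is its length. -/
def GraphCycle.IsPrime {V A : Type*} {o t : A → V} (C : GraphCycle o t) : Prop :=
  ∀ d, 0 < d → d < C.len → ∃ i, C.arcs (i + d) ≠ C.arcs i

/-- Two cycles are equivalent if one is a cyclic rotation of the other. -/
def GraphCycle.Equiv {V A : Type*} {o t : A → V} (C D : GraphCycle o t) : Prop :=
  C.len = D.len ∧ ∃ k, ∀ j, D.arcs j = C.arcs (j + k)

/-- The weight w_C of a cycle: the product of the matrix entries along it. -/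
def GraphCycle.weight {V A : Type*} {o t : A → V} (U : Matrix A A ℂ)
    (C : GraphCycle o t) : ℂ :=
  ∏ i ∈ Finset.range C.len, U (C.arcs i) (C.arcs (i + 1))

namespace EulerAux

def Per {A : Type*} (f : ℕ → A) (p : ℕ) : Prop := ∀ i, f (i + p) = f i

variable {A : Type*} {f : ℕ → A} {p q m : ℕ}

lemma Per.add_mul (h : Per f p) : ∀ (k i : ℕ), f (i + k * p) = f i
  | 0, i => by simp
  | k + 1, i => by
      rw [Nat.succ_mul, ← Nat.add_assoc, h (i + k * p)]
      exact h.add_mul k i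

lemma Per.mod_eq (h : Per f p) (i : ℕ) : f i = f (i % p) := by
  conv_lhs => rw [← Nat.mod_add_div i p, Nat.mul_comm]
  exact h.add_mul _ _

lemma Per.congr_mod (h : Per f p) {i j : ℕ} (hij : i % p = j % p) : f i = f j := by
  rw [h.mod_eq i, h.mod_eq j, hij]

lemma Per.of_dvd (h : Per f p) (hpq : p ∣ q) : Per f q := by
  obtain ⟨k, rfl⟩ := hpq
  intro i
  rw [Nat.mul_comm]
  exact h.add_mul _ _

lemma Per.mod_per (h : Per f p) (hm : Per f m) : Per f (m % p) := by
  intro i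
  have h1 : i + m % p + m / p * p = i + m := by
    rw [Nat.add_assoc, Nat.mod_add_div' m p]
  calc f (i + m % p) = f (i + m % p + m / p * p) := (h.add_mul _ _).symm
    _ = f (i + m) := by rw [h1]
    _ = f i := hm i

section Cycle

variable {V A : Type*} {o t : A → V} {C : GraphCycle o t}

lemma per_arcs (C : GraphCycle o t) : Per C.arcs C.len := C.periodic

/-- In a prime cycle, if shifting by `a` equals shifting by `b`, then `a ≡ b mod len`. -/
lemma prime_shift_aux (hP : C.IsPrime) {a b : ℕ} (hab : a ≤ b)
    (h : ∀ i, C.arcs (i + a) = C.arcs (i + b)) : a % C.len = b % C.len := by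
  have hlen := C.pos
  set e := b - a with he
  have hb : b = a + e := by omega
  have hper : Per C.arcs e := by
    intro j
    have hle : a ≤ j + a * C.len := by
      have : a ≤ a * C.len := Nat.le_mul_of_pos_right a hlen
      omega
    have hi := h (j + a * C.len - a)
    rw [Nat.sub_add_cancel hle] at hi
    have hi2 : j + a * C.len - a + b = j + a * C.len + e := by omega
    rw [hi2] at hi
    calc C.arcs (j + e) = C.arcs (j + e + a * C.len) := ((per_arcs C).add_mul a (j + e)).symm
      _ = C.arcs (j + a * C.len + e) := by ring_nf
      _ = C.arcs (j + a * C.len) := by rw [← hi]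
      _ = C.arcs j := (per_arcs C).add_mul a j
  have hper' : Per C.arcs (e % C.len) := (per_arcs C).mod_per hper
  have hz : e % C.len = 0 := by
    by_contra hne
    obtain ⟨i, hi⟩ := hP (e % C.len) (Nat.pos_of_ne_zero hne) (Nat.mod_lt _ hlen)
    exact hi (hper' i)
  rw [hb, Nat.add_mod, hz, Nat.add_zero, Nat.mod_mod]
lemma prime_shift (hP : C.IsPrime) {a b : ℕ}
    (h : ∀ i, C.arcs (i + a) = C.arcs (i + b)) : a % C.len = b % C.len := by
  rcases Nat.le_total a b with hab | hab
  · exact prime_shift_aux hP hab h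
  · exact (prime_shift_aux hP hab (fun i => (h i).symm)).symm

lemma arcs_congr_mod {a b : ℕ} (h : a % C.len = b % C.len) : C.arcs a = C.arcs b :=
  (per_arcs C).congr_mod h

/-- If a `k`-shift of the arcs of a prime cycle has period `e`, then `len ∣ e`. -/
lemma prime_per (hP : C.IsPrime) {k e : ℕ} (h : Per (fun i => C.arcs (i + k)) e) :
    C.len ∣ e := by
  have h' : ∀ i, C.arcs (i + (k + e)) = C.arcs (i + k) := by
    intro i
    have := h i
    simpa [Nat.add_assoc, Nat.add_comm e k, Nat.add_left_comm] using this
  have := prime_shift hP h'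
  have h2 : k + e ≡ k + 0 [MOD C.len] := by simpa [Nat.ModEq] using this
  exact (Nat.modEq_zero_iff_dvd).mp (Nat.ModEq.add_left_cancel' k h2)

end Cycle

section Walk

variable {A : Type*} [Fintype A] [DecidableEq A] (U : Matrix A A ℂ)

/-- weight of a path `a :: l` ending with a final step into `b`. -/
def pathW : A → List A → A → ℂ
  | a, [], b => U a b
  | a, x :: l, b => U a x * pathW x l b

lemma pow_apply (n : ℕ) (a b : A) :
    (U ^ (n + 1)) a b = ∑ c : Fin n → A, pathW U a (List.ofFn c) b := by
  induction n generalizing a with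
  | zero =>
      rw [pow_one]
      rw [Fintype.sum_unique (fun c : Fin 0 → A => pathW U a (List.ofFn c) b)]
      simp [pathW]
  | succ n ih =>
      rw [pow_succ', Matrix.mul_apply]
      simp_rw [ih]
      rw [← Equiv.sum_comp (Fin.consEquiv (fun _ : Fin (n + 1) => A))
        (fun c : Fin (n + 1) → A => pathW U a (List.ofFn c) b)]
      rw [Fintype.sum_prod_type]
      refine Finset.sum_congr rfl fun x _ => ?_
      rw [Finset.mul_sum]
      refine Finset.sum_congr rfl fun c _ => ?_
      have : List.ofFn ((Fin.consEquiv (fun _ : Fin (n+1) => A)) (x, c)) = x :: List.ofFn c := by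
        simp [Fin.consEquiv, List.ofFn_succ]
      rw [this]
      rfl

/-- cyclic extension of a tuple. -/
def cyc {n : ℕ} (c : Fin (n + 1) → A) : ℕ → A :=
  fun i => c ⟨i % (n + 1), Nat.mod_lt _ (Nat.succ_pos n)⟩

lemma per_cyc {n : ℕ} (c : Fin (n + 1) → A) : Per (cyc c) (n + 1) := by
  intro i
  unfold cyc
  congr 1
  exact Fin.ext (by simp [Nat.add_mod_right])

lemma cyc_val {n : ℕ} (c : Fin (n + 1) → A) (i : Fin (n + 1)) : cyc c i.1 = c i := by
  unfold cyc
  congr 1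
  exact Fin.ext (by simp [Nat.mod_eq_of_lt i.2])

/-- cyclic weight of a tuple. -/
def wt {n : ℕ} (c : Fin (n + 1) → A) : ℂ :=
  ∏ i ∈ Finset.range (n + 1), U (cyc c i) (cyc c (i + 1))

lemma pathW_eq (l : List A) : ∀ a b : A,
    pathW U a l b = (∏ i ∈ Finset.range l.length,
      U ((a :: l).getD i b) ((a :: l).getD (i + 1) b)) * U ((a :: l).getD l.length b) b := by
  induction l with
  | nil => intro a b; simp [pathW]
  | cons x l ih =>
      intro a b
      have hg0 : (a :: x :: l).getD 0 b = a := rfl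
      have hgs : ∀ i : ℕ, (a :: x :: l).getD (i + 1) b = (x :: l).getD i b := fun i => rfl
      rw [List.length_cons, Finset.prod_range_succ']
      simp only [hgs, hg0]
      have h1 : (x :: l).getD 0 b = x := rfl
      rw [h1, pathW, ih x b]
      ring

lemma pathW_cyc {n : ℕ} (c : Fin (n + 1) → A) :
    pathW U (c 0) (List.ofFn (Fin.tail c)) (c 0) = wt U c := by
  have hofn : (c 0 : A) :: List.ofFn (Fin.tail c) = List.ofFn c := by
    rw [List.ofFn_succ]; rfl
  have hlen : (List.ofFn (Fin.tail c)).length = n := by simp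
  have hgetD : ∀ i : ℕ, i < n + 1 → ((c 0) :: List.ofFn (Fin.tail c)).getD i (c 0) = cyc c i := by
    intro i hi
    rw [hofn, List.getD_eq_getElem _ _ (by simpa using hi)]
    simp only [List.getElem_ofFn]
    unfold cyc
    congr 1
    exact Fin.ext (by simp [Nat.mod_eq_of_lt hi])
  have hgetDlast : ((c 0) :: List.ofFn (Fin.tail c)).getD (n + 1) (c 0) = cyc c (n + 1) := by
    rw [hofn, List.getD_eq_default _ _ (by simp)]
    unfold cyc
    congr 1
    exact Fin.ext (by simp [Nat.mod_self])
  rw [pathW_eq, hlen, wt, Finset.prod_range_succ]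
  congr 1
  · refine Finset.prod_congr rfl fun i hi => ?_
    rw [Finset.mem_range] at hi
    rw [hgetD i (by omega), hgetD (i + 1) (by omega)]
  · rw [hgetD n (by omega)]
    have : cyc c (n + 1) = c 0 := by rw [← hgetDlast, hofn, List.getD_eq_default _ _ (by simp)]
    rw [this]

lemma trace_pow (n : ℕ) : (U ^ (n + 1)).trace = ∑ c : Fin (n + 1) → A, wt U c := by
  rw [Matrix.trace]
  simp only [Matrix.diag]
  simp_rw [pow_apply U n]
  rw [← Equiv.sum_comp (Fin.consEquiv (fun _ : Fin (n+1) => A))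
    (fun c : Fin (n + 1) → A => wt U c), Fintype.sum_prod_type]
  refine Finset.sum_congr rfl fun a _ => Finset.sum_congr rfl fun c _ => ?_
  have he : (Fin.consEquiv (fun _ : Fin (n+1) => A)) (a, c) = Fin.cons a c := rfl
  rw [he, ← pathW_cyc]
  have h0 : (Fin.cons a c : Fin (n+1) → A) 0 = a := rfl
  have ht : Fin.tail (Fin.cons a c : Fin (n+1) → A) = c := by funext i; simp [Fin.tail]
  rw [h0, ht]


lemma wt_closed {V : Type*} {o t : A → V} (hU : ∀ e f, t e ≠ o f → U e f = 0)
    {n : ℕ} {c : Fin (n + 1) → A} (h : wt U c ≠ 0) :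
    ∀ i : ℕ, t (cyc c i) = o (cyc c (i + 1)) := by
  have hfac : ∀ j ∈ Finset.range (n + 1), U (cyc c j) (cyc c (j + 1)) ≠ 0 :=
    Finset.prod_ne_zero_iff.mp h
  intro i
  set j := i % (n + 1) with hj
  have hjlt : j < n + 1 := Nat.mod_lt _ (Nat.succ_pos n)
  have h1 : cyc c i = cyc c j := (per_cyc c).congr_mod (by simp [hj, Nat.mod_mod])
  have h2 : cyc c (i + 1) = cyc c (j + 1) := by
    refine (per_cyc c).congr_mod ?_
    have hij : i ≡ j [MOD n + 1] := by simp [Nat.ModEq, hj, Nat.mod_mod]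
    exact hij.add_right 1
  rw [h1, h2]
  by_contra hne
  exact hfac j (Finset.mem_range.mpr hjlt) (hU _ _ hne)

lemma wt_norm_le {M : ℝ} (hM : ∀ a b : A, ‖U a b‖ ≤ M) {n : ℕ} (c : Fin (n + 1) → A) :
    ‖wt U c‖ ≤ M ^ (n + 1) := by
  rw [wt, norm_prod]
  calc ∏ i ∈ Finset.range (n + 1), ‖U (cyc c i) (cyc c (i + 1))‖
      ≤ ∏ _i ∈ Finset.range (n + 1), M :=
        Finset.prod_le_prod (fun _ _ => norm_nonneg _) (fun i _ => hM _ _)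
    _ = M ^ (n + 1) := by rw [Finset.prod_const, Finset.card_range]

section ProdShift

variable {g : ℕ → ℂ} {p : ℕ}

lemma prod_shift_one (hg : Per g p) (hp : 0 < p) :
    ∏ i ∈ Finset.range p, g (i + 1) = ∏ i ∈ Finset.range p, g i := by
  obtain ⟨q, rfl⟩ := Nat.exists_eq_succ_of_ne_zero hp.ne'
  rw [Finset.prod_range_succ, Finset.prod_range_succ']
  have hg0 : g (q + 1) = g 0 := by simpa using hg 0
  rw [hg0]

lemma prod_shift (hg : Per g p) (hp : 0 < p) (k : ℕ) :
    ∏ i ∈ Finset.range p, g (i + k) = ∏ i ∈ Finset.range p, g i := by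
  induction k with
  | zero => simp
  | succ k ih =>
      have hgk : Per (fun i => g (i + k)) p := fun i => by
        simp only []
        rw [show i + p + k = i + k + p by ring, hg]
      have h1 : ∀ i : ℕ, g (i + (k + 1)) = (fun j => g (j + k)) (i + 1) := by
        intro i; simp only []; congr 1; ring
      simp_rw [h1]
      rw [prod_shift_one hgk hp]
      exact ih

lemma prod_blocks (hg : Per g p) (hp : 0 < p) (s k : ℕ) :
    ∏ i ∈ Finset.range (s * p), g (i + k) = (∏ i ∈ Finset.range p, g i) ^ s := by
  induction s with
  | zero => simp
  | succ s ih =>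
      rw [Nat.succ_mul, Finset.prod_range_add, ih, pow_succ]
      congr 1
      have : ∀ i : ℕ, g (s * p + i + k) = g (i + k) := by
        intro i
        rw [show s * p + i + k = i + k + s * p by ring, hg.add_mul]
      simp_rw [this]
      exact prod_shift hg hp k

end ProdShift

end Walk

section Eigen

variable {A : Type*} [Fintype A] [DecidableEq A]

lemma eval_charpoly (M : Matrix A A ℂ) (x : ℂ) :
    M.charpoly.eval x = (x • (1 : Matrix A A ℂ) - M).det := by
  rw [Matrix.charpoly, ← Polynomial.coe_evalRingHom, RingHom.map_det]
  congr 1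
  ext i j
  rcases eq_or_ne i j with rfl | h
  · simp [Matrix.charmatrix_apply_eq, Matrix.sub_apply, Matrix.smul_apply,
      Matrix.one_apply_eq, smul_eq_mul]
  · simp [Matrix.charmatrix_apply_ne _ _ _ h, Matrix.sub_apply, Matrix.smul_apply,
      Matrix.one_apply_ne h, smul_eq_mul]

lemma multiset_prod_neg (s : Multiset ℂ) (f : ℂ → ℂ) :
    ((s.map fun l => -(f l)).prod) = (-1) ^ Multiset.card s * (s.map f).prod := by
  have h : (s.map fun l => -(f l)) = (s.map f).map Neg.neg := by
    rw [Multiset.map_map]; rfl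
  rw [h, Multiset.prod_map_neg, Multiset.card_map]

lemma roots_card (M : Matrix A A ℂ) :
    Multiset.card M.charpoly.roots = Fintype.card A := by
  rw [← Matrix.charpoly_natDegree_eq_dim M]
  exact Polynomial.splits_iff_card_roots.mp (IsAlgClosed.splits _)

lemma det_sub_smul_one (M : Matrix A A ℂ) (μ : ℂ) :
    (M - μ • 1).det = ((M.charpoly.roots).map fun l => l - μ).prod := by
  have h1 : (M - μ • (1 : Matrix A A ℂ)) = -(μ • 1 - M) := by rw [neg_sub]
  have h2 : ((M.charpoly.roots).map fun l => l - μ)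
      = (M.charpoly.roots).map fun l => -(μ - l) :=
    Multiset.map_congr rfl (fun a _ => by ring)
  rw [h1, Matrix.det_neg, ← eval_charpoly, h2, multiset_prod_neg, roots_card]
  congr 1
  conv_lhs => rw [(IsAlgClosed.splits _).eq_prod_roots_of_monic (Matrix.charpoly_monic M)]
  rw [Polynomial.eval_multiset_prod, Multiset.map_map]
  refine congrArg Multiset.prod (Multiset.map_congr rfl fun a _ => ?_)
  simp

lemma det_pow_sub_smul_one (M : Matrix A A ℂ) (j : ℕ) (hj : 0 < j) (x : ℂ) :
    (M ^ j - x • 1).det = ((M.charpoly.roots).map fun l => l ^ j - x).prod := by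
  set p : Polynomial ℂ := Polynomial.X ^ j - Polynomial.C x with hp
  have hpm : p.Monic := Polynomial.monic_X_pow_sub_C x hj.ne'
  have hfact : p = (p.roots.map fun μ => Polynomial.X - Polynomial.C μ).prod :=
    ((IsAlgClosed.splits _).eq_prod_roots_of_monic hpm)
  set lA : List ℂ := p.roots.toList with hlA
  have hlAcoe : (lA : Multiset ℂ) = p.roots := Multiset.coe_toList _
  have haev : (Polynomial.aeval M) p = M ^ j - x • 1 := by
    simp [hp, Algebra.algebraMap_eq_smul_one]
  have hfact' : (Polynomial.aeval M) p = (lA.map fun μ => M - μ • 1).prod := by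
    conv_lhs => rw [hfact, ← hlAcoe, Multiset.map_coe, Multiset.prod_coe]
    rw [map_list_prod (Polynomial.aeval M : Polynomial ℂ →ₐ[ℂ] Matrix A A ℂ), List.map_map]
    congr 1
    refine List.map_congr_left fun μ _ => ?_
    simp [Algebra.algebraMap_eq_smul_one]
  have hdet : (M ^ j - x • 1).det = (lA.map fun μ => (M - μ • 1).det).prod := by
    rw [← haev, hfact', ← Matrix.coe_detMonoidHom,
      MonoidHom.map_list_prod (Matrix.detMonoidHom : Matrix A A ℂ →* ℂ), List.map_map]
    rfl
  have hev : ∀ l : ℂ, ((p.roots.map fun μ => l - μ)).prod = l ^ j - x := by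
    intro l
    have h := congrArg (Polynomial.eval l) hfact
    rw [Polynomial.eval_multiset_prod, Multiset.map_map] at h
    have h2 : Multiset.map (Polynomial.eval l ∘ fun μ => Polynomial.X - Polynomial.C μ) p.roots
        = p.roots.map fun μ => l - μ := Multiset.map_congr rfl fun a _ => by simp
    rw [h2] at h
    rw [← h]
    simp [hp]
  calc (M ^ j - x • 1).det
      = (lA.map fun μ => (M - μ • 1).det).prod := hdet
    _ = (p.roots.map fun μ => ((M.charpoly.roots).map fun l => l - μ).prod).prod := by
        rw [← hlAcoe, Multiset.map_coe, Multiset.prod_coe]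
        congr 1
        exact List.map_congr_left fun μ _ => det_sub_smul_one M μ
    _ = ((M.charpoly.roots).map fun l => ((p.roots.map fun μ => l - μ)).prod).prod := by
        rw [Multiset.prod_map_prod_map]
    _ = ((M.charpoly.roots).map fun l => l ^ j - x).prod := by
        exact congrArg Multiset.prod (Multiset.map_congr rfl fun l _ => hev l)

lemma charpoly_pow (M : Matrix A A ℂ) (j : ℕ) (hj : 0 < j) :
    (M ^ j).charpoly = (((M.charpoly.roots).map fun l => l ^ j).map
      fun a => Polynomial.X - Polynomial.C a).prod := by
  apply Polynomial.funext
  intro x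
  rw [eval_charpoly, Polynomial.eval_multiset_prod, Multiset.map_map, Multiset.map_map]
  have h1 : (x • (1 : Matrix A A ℂ) - M ^ j) = -(M ^ j - x • 1) := by rw [neg_sub]
  rw [h1, Matrix.det_neg, det_pow_sub_smul_one M j hj x]
  have h2 : Multiset.map ((Polynomial.eval x ∘ fun a => Polynomial.X - Polynomial.C a) ∘ fun l => l ^ j)
        M.charpoly.roots
      = (M.charpoly.roots).map fun l => -(l ^ j - x) :=
    Multiset.map_congr rfl fun a _ => by
      simp only [Function.comp_apply, Polynomial.eval_sub, Polynomial.eval_X, Polynomial.eval_C]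
      ring
  rw [h2, multiset_prod_neg, roots_card]

lemma trace_pow_eq (M : Matrix A A ℂ) (j : ℕ) (hj : 0 < j) :
    (M ^ j).trace = ((M.charpoly.roots).map fun l => l ^ j).sum := by
  rw [Matrix.trace_eq_sum_roots_charpoly, charpoly_pow M j hj,
    Polynomial.roots_multiset_prod_X_sub_C]

lemma eigen_package (M : Matrix A A ℂ) :
    ∃ (N : ℕ) (d : Fin N → ℂ),
      (∀ j : ℕ, 0 < j → (M ^ j).trace = ∑ i, d i ^ j) ∧
      (∀ u : ℂ, ((1 : Matrix A A ℂ) - u • M).det = ∏ i, (1 - u * d i)) := by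
  classical
  set ρ := M.charpoly.roots with hρ
  have key_sum : ∀ f : ℂ → ℂ, (ρ.map f).sum = ∑ i, f (ρ.toList.get i) := by
    intro f
    have h1 : ρ.map f = ((ρ.toList : Multiset ℂ)).map f := by rw [Multiset.coe_toList]
    rw [h1, Multiset.map_coe, Multiset.sum_coe]
    conv_lhs => rw [← List.ofFn_get ρ.toList, List.map_ofFn, List.sum_ofFn]
    rfl
  have key_prod : ∀ f : ℂ → ℂ, (ρ.map f).prod = ∏ i, f (ρ.toList.get i) := by
    intro f
    have h1 : ρ.map f = ((ρ.toList : Multiset ℂ)).map f := by rw [Multiset.coe_toList]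
    rw [h1, Multiset.map_coe, Multiset.prod_coe]
    conv_lhs => rw [← List.ofFn_get ρ.toList, List.map_ofFn, List.prod_ofFn]
    rfl
  refine ⟨ρ.toList.length, fun i => ρ.toList.get i, ?_, ?_⟩
  · intro j hj
    rw [trace_pow_eq M j hj, ← hρ, key_sum]
  · intro u
    rcases eq_or_ne u 0 with rfl | hu
    · simp
    · have h1 : (1 : Matrix A A ℂ) - u • M = (-u) • (M - u⁻¹ • (1 : Matrix A A ℂ)) := by
        rw [smul_sub, smul_smul, neg_mul, mul_inv_cancel₀ hu]
        simp [neg_smul]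
        abel
      rw [h1, Matrix.det_smul, det_sub_smul_one, ← hρ]
      have h2 : (ρ.map fun l => (-u) * (l - u⁻¹)).prod
          = (ρ.map fun _ => -u).prod * (ρ.map fun l => l - u⁻¹).prod := by
        rw [← Multiset.prod_map_mul]
      have h3 : (ρ.map fun _ => -u).prod = (-u) ^ Fintype.card A := by
        rw [Multiset.map_const', Multiset.prod_replicate, roots_card]
      have h4 : (ρ.map fun l => (-u) * (l - u⁻¹)).prod = (ρ.map fun l => 1 - u * l).prod := by
        refine congrArg Multiset.prod (Multiset.map_congr rfl fun a _ => ?_)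
        field_simp
        ring
      refine Eq.trans ?_ (key_prod (fun l => 1 - u * l))
      rw [← h4, h2, h3]

end Eigen

section Bij

variable {V A : Type*} [Fintype A] [DecidableEq A] {o t : A → V}

/-- Index type: all closed walks, of any length `n+1`. -/
abbrev WalkT (A : Type*) := Σ n : ℕ, (Fin (n + 1) → A)

/-- Index type: (representative prime cycle, number of extra repetitions, rotation offset). -/
abbrev IdxT (R : Set (GraphCycle o t)) := Σ p : ↥R × ℕ, Fin ((p.1 : GraphCycle o t).len)

noncomputable def termW (U : Matrix A A ℂ) (u : ℂ) : WalkT A → ℂ :=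
  fun w => u ^ (w.1 + 1) * wt U w.2 / ((w.1 + 1 : ℕ) : ℂ)

noncomputable def termI (U : Matrix A A ℂ) (u : ℂ) (R : Set (GraphCycle o t)) : IdxT R → ℂ :=
  fun x => (GraphCycle.weight U (x.1.1 : GraphCycle o t) * u ^ (x.1.1 : GraphCycle o t).len) ^ (x.1.2 + 1) /
    (((x.1.2 + 1) * (x.1.1 : GraphCycle o t).len : ℕ) : ℂ)

def fwd (R : Set (GraphCycle o t)) : IdxT R → WalkT A :=
  fun x => ⟨x.1.2 * (x.1.1 : GraphCycle o t).len + ((x.1.1 : GraphCycle o t).len - 1),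
    fun i => (x.1.1 : GraphCycle o t).arcs (i + x.2)⟩

variable {R : Set (GraphCycle o t)} {U : Matrix A A ℂ} {u : ℂ}

lemma fwd_fst (x : IdxT R) :
    (fwd R x).1 + 1 = (x.1.2 + 1) * (x.1.1 : GraphCycle o t).len := by
  have hpos := (x.1.1 : GraphCycle o t).pos
  show x.1.2 * (x.1.1 : GraphCycle o t).len + ((x.1.1 : GraphCycle o t).len - 1) + 1
      = (x.1.2 + 1) * (x.1.1 : GraphCycle o t).len
  rw [Nat.succ_mul]
  omega

lemma cyc_fwd (x : IdxT R) (i : ℕ) :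
    cyc (fwd R x).2 i = (x.1.1 : GraphCycle o t).arcs (i + x.2) := by
  set C := (x.1.1 : GraphCycle o t) with hC
  set n := (fwd R x).1 with hn
  have hm : n + 1 = (x.1.2 + 1) * C.len := fwd_fst x
  have hdvd : C.len ∣ n + 1 := ⟨x.1.2 + 1, by rw [hm, Nat.mul_comm]⟩
  show C.arcs ((i % (n + 1)) + (x.2 : ℕ)) = C.arcs (i + x.2)
  refine arcs_congr_mod ?_
  have h1 : i % (n + 1) ≡ i [MOD C.len] :=
    ((Nat.mod_modEq i (n + 1)).of_dvd hdvd)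
  exact h1.add_right (x.2 : ℕ)

lemma per_g (C : GraphCycle o t) :
    Per (fun j => U (C.arcs j) (C.arcs (j + 1))) C.len := by
  intro j
  simp only []
  rw [C.periodic j, show j + C.len + 1 = (j + 1) + C.len by ring, C.periodic (j + 1)]

lemma termW_fwd (x : IdxT R) : termW U u (fwd R x) = termI U u R x := by
  set C := (x.1.1 : GraphCycle o t) with hC
  set r := x.1.2 with hr
  set k := (x.2 : ℕ) with hk
  set n := (fwd R x).1 with hn
  have hm : n + 1 = (r + 1) * C.len := fwd_fst x
  have hwt : wt U (fwd R x).2 = (GraphCycle.weight U C) ^ (r + 1) := by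
    rw [wt]
    have h1 : ∀ i ∈ Finset.range (n + 1),
        U (cyc (fwd R x).2 i) (cyc (fwd R x).2 (i + 1))
          = (fun j => U (C.arcs j) (C.arcs (j + 1))) (i + k) := by
      intro i _
      rw [cyc_fwd, cyc_fwd]
      simp only []
      rw [show i + 1 + k = (i + k) + 1 by ring]
    rw [Finset.prod_congr rfl h1, hm]
    rw [prod_blocks (per_g C) C.pos (r + 1) k]
    rfl
  rw [termW, termI, hwt, ← hC, ← hr, ← hn, hm]
  rw [show u ^ ((r + 1) * C.len) = (u ^ C.len) ^ (r + 1) by rw [← pow_mul, Nat.mul_comm]]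
  rw [mul_pow]
  ring


lemma WalkT_ext {w w' : WalkT A} (h1 : w.1 = w'.1)
    (h2 : ∀ i : ℕ, cyc w.2 i = cyc w'.2 i) : w = w' := by
  obtain ⟨n, c⟩ := w
  obtain ⟨n', c'⟩ := w'
  simp only at h1
  subst h1
  simp only [Sigma.mk.inj_iff, heq_eq_eq, true_and]
  funext i
  have h3 := h2 i.1
  rw [cyc_val, cyc_val] at h3
  exact h3

lemma beta_add {L k' : ℕ} (hL : 0 < L) : ((L - k' % L) % L + k') % L = 0 := by
  have h1 : k' % L ≤ L := (Nat.mod_lt _ hL).le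
  rw [Nat.mod_add_mod]
  have h2 : (L - k' % L + k') % L = (L - k' % L + k' % L) % L := by
    rw [Nat.add_mod, Nat.add_mod (L - k' % L) (k' % L), Nat.mod_mod]
  rw [h2, Nat.sub_add_cancel h1, Nat.mod_self]

lemma fwd_injective (hR1 : ∀ D ∈ R, D.IsPrime)
    (hR2 : ∀ C : GraphCycle o t, C.IsPrime → ∃! D, D ∈ R ∧ C.Equiv D) :
    Function.Injective (fwd R) := by
  rintro ⟨⟨⟨C, hCR⟩, r⟩, k⟩ ⟨⟨⟨C', hCR'⟩, r'⟩, k'⟩ h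
  have hm : (r + 1) * C.len = (r' + 1) * C'.len := by
    have h1 := fwd_fst (R := R) ⟨⟨⟨C, hCR⟩, r⟩, k⟩
    have h2 := fwd_fst (R := R) ⟨⟨⟨C', hCR'⟩, r'⟩, k'⟩
    simp only at h1 h2
    rw [← h1, ← h2, congrArg Sigma.fst h]
  have harcs : ∀ i : ℕ, C.arcs (i + k) = C'.arcs (i + k') := by
    intro i
    have e1 := cyc_fwd (R := R) ⟨⟨⟨C, hCR⟩, r⟩, k⟩ i
    have e2 := cyc_fwd (R := R) ⟨⟨⟨C', hCR'⟩, r'⟩, k'⟩ i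
    simp only at e1 e2
    rw [← e1, ← e2, h]
  have hpC : C.IsPrime := hR1 C hCR
  have hpC' : C'.IsPrime := hR1 C' hCR'
  have hlen : C.len = C'.len := by
    have hd1 : C.len ∣ C'.len := by
      refine prime_per hpC (k := (k : ℕ)) (e := C'.len) ?_
      intro i
      simp only []
      calc C.arcs (i + C'.len + (k : ℕ)) = C'.arcs (i + C'.len + (k' : ℕ)) := harcs (i + C'.len)
        _ = C'.arcs ((i + (k' : ℕ)) + C'.len) := by ring_nf
        _ = C'.arcs (i + (k' : ℕ)) := C'.periodic _
        _ = C.arcs (i + (k : ℕ)) := (harcs i).symm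
    have hd2 : C'.len ∣ C.len := by
      refine prime_per hpC' (k := (k' : ℕ)) (e := C.len) ?_
      intro i
      simp only []
      calc C'.arcs (i + C.len + (k' : ℕ)) = C.arcs (i + C.len + (k : ℕ)) := (harcs (i + C.len)).symm
        _ = C.arcs ((i + (k : ℕ)) + C.len) := by ring_nf
        _ = C.arcs (i + (k : ℕ)) := C.periodic _
        _ = C'.arcs (i + (k' : ℕ)) := harcs i
    exact Nat.dvd_antisymm hd1 hd2
  have hequiv : C.Equiv C' := by
    refine ⟨hlen, ?_⟩
    set β := (C.len - (k' : ℕ) % C.len) % C.len with hβ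
    refine ⟨β + (k : ℕ), fun j => ?_⟩
    have h0 : (β + (k' : ℕ)) % C.len = 0 := beta_add C.pos
    have h1 : C'.arcs j = C'.arcs (j + β + (k' : ℕ)) := by
      refine arcs_congr_mod ?_
      have h0' : (β + (k' : ℕ)) % C'.len = 0 := by
        obtain ⟨kn, hkn⟩ : ∃ m : ℕ, (k' : ℕ) = m := ⟨_, rfl⟩
        rw [hkn] at h0 ⊢
        rw [← hlen]
        exact h0
      calc j % C'.len = (j % C'.len + (β + (k' : ℕ)) % C'.len) % C'.len := by
            rw [h0', Nat.add_zero, Nat.mod_mod]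
        _ = (j + (β + (k' : ℕ))) % C'.len := (Nat.add_mod _ _ _).symm
        _ = (j + β + (k' : ℕ)) % C'.len := by rw [Nat.add_assoc]
    rw [h1, ← harcs (j + β), Nat.add_assoc]
  have hCeq : C = C' := by
    obtain ⟨D, _, hun⟩ := hR2 C hpC
    have e1 : C = D := hun C ⟨hCR, ⟨rfl, 0, fun j => by simp⟩⟩
    have e2 : C' = D := hun C' ⟨hCR', hequiv⟩
    rw [e1, e2]
  subst hCeq
  have hk : (k : ℕ) = (k' : ℕ) := by
    have h1 := prime_shift hpC harcs
    rw [Nat.mod_eq_of_lt k.2, Nat.mod_eq_of_lt k'.2] at h1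
    exact h1
  have hr : r = r' := by
    have := Nat.eq_of_mul_eq_mul_right C.pos hm
    omega
  subst hr
  have hk' : k = k' := Fin.ext hk
  subst hk'
  rfl

lemma fwd_surj (hU : ∀ e f, t e ≠ o f → U e f = 0)
    (hR2 : ∀ C : GraphCycle o t, C.IsPrime → ∃! D, D ∈ R ∧ C.Equiv D)
    (w : WalkT A) (hw : termW U u w ≠ 0) : ∃ x : IdxT R, fwd R x = w := by
  classical
  obtain ⟨n, c⟩ := w
  have hwt : wt U c ≠ 0 := by
    intro h0
    apply hw
    rw [termW]
    simp only at h0 ⊢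
    rw [h0]
    simp
  set f : ℕ → A := cyc c with hf
  have hperm : Per f (n + 1) := per_cyc c
  have hclosed : ∀ i, t (f i) = o (f (i + 1)) := wt_closed U hU hwt
  have Hex : ∃ e, 0 < e ∧ Per f e := ⟨n + 1, Nat.succ_pos n, hperm⟩
  set dd := Nat.find Hex with hdd
  obtain ⟨hd0, hdper⟩ : 0 < dd ∧ Per f dd := Nat.find_spec Hex
  have hdvd : dd ∣ n + 1 := by
    have hper' : Per f ((n + 1) % dd) := hdper.mod_per hperm
    rcases Nat.eq_zero_or_pos ((n + 1) % dd) with hz | hpos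
    · exact Nat.dvd_of_mod_eq_zero hz
    · exact absurd ⟨hpos, hper'⟩ (Nat.find_min Hex (Nat.mod_lt _ hd0))
  set C₀ : GraphCycle o t := ⟨dd, hd0, f, hdper, hclosed⟩ with hC₀
  have hprime : C₀.IsPrime := by
    intro e he hlt
    by_contra hcon
    push_neg at hcon
    exact Nat.find_min Hex hlt ⟨he, hcon⟩
  obtain ⟨D, ⟨hDR, hDlen, kk, hkk⟩, _⟩ := hR2 C₀ hprime
  have hDd : D.len = dd := hDlen.symm
  set β := (dd - kk % dd) % dd with hβ
  have hβlt : β < dd := Nat.mod_lt _ hd0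
  have hfD : ∀ i, f i = D.arcs (i + β) := by
    intro i
    rw [hkk (i + β)]
    have h0 : (β + kk) % dd = 0 := beta_add hd0
    refine (hdper.congr_mod ?_).symm
    calc (i + β + kk) % dd = (i + (β + kk)) % dd := by rw [Nat.add_assoc]
      _ = (i % dd + (β + kk) % dd) % dd := Nat.add_mod _ _ _
      _ = i % dd := by rw [h0, Nat.add_zero, Nat.mod_mod]
  set r := (n + 1) / dd - 1 with hr
  have hrd : (r + 1) * dd = n + 1 := by
    have h1 : 1 ≤ (n + 1) / dd :=
      (Nat.one_le_div_iff hd0).mpr (Nat.le_of_dvd (Nat.succ_pos n) hdvd)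
    rw [hr, Nat.sub_add_cancel h1]
    exact Nat.div_mul_cancel hdvd
  refine ⟨⟨⟨⟨D, hDR⟩, r⟩, ⟨β, by rw [hDd]; exact hβlt⟩⟩, ?_⟩
  refine WalkT_ext ?_ ?_
  · show r * D.len + (D.len - 1) = n
    rw [hDd]
    rw [Nat.succ_mul] at hrd
    omega
  · intro i
    rw [cyc_fwd]
    exact (hfD i).symm

lemma hasSum_log_shift {z : ℂ} (hz : ‖z‖ < 1) :
    HasSum (fun n : ℕ => z ^ (n + 1) / ((n + 1 : ℕ) : ℂ)) (-Complex.log (1 - z)) := by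
  have h := Complex.hasSum_taylorSeries_neg_log hz
  have h2 := (hasSum_nat_add_iff' (f := fun n : ℕ => z ^ n / (n : ℂ)) 1).mpr h
  simpa using h2

lemma one_sub_ne_zero {z : ℂ} (hz : ‖z‖ < 1) : 1 - z ≠ 0 := by
  intro h0
  have : z = 1 := by linear_combination -h0
  rw [this] at hz
  simp at hz

end Bij
end EulerAux

set_option maxHeartbeats 2000000 in
open EulerAux in
/-- Euler product: for |u| small, det(I_{2m} - u·U) = ∏_{[C]} (1 - w_C u^{|C|}),
the product running over a set of representatives of the equivalence classes of
prime cycles of the graph. -/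
theorem det_eq_euler_product_over_prime_cycles
    (V A : Type*) [Fintype V] [Fintype A] [DecidableEq A]
    (m : ℕ) (hm : Fintype.card A = 2 * m)
    (o t : A → V) (U : Matrix A A ℂ)
    (hU : ∀ e f, t e ≠ o f → U e f = 0) :
    ∃ ε > (0 : ℝ), ∀ u : ℂ, ‖u‖ < ε →
      ∀ R : Set (GraphCycle o t),
        (∀ D ∈ R, D.IsPrime) →
        (∀ C : GraphCycle o t, C.IsPrime → ∃! D, D ∈ R ∧ C.Equiv D) →
        HasProd (fun C : R => 1 - GraphCycle.weight U C.1 * u ^ C.1.len)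
          ((1 - u • U).det) := by
  classical
  obtain ⟨N, d, htr, hdet⟩ := eigen_package U
  set Mb : ℝ := ∑ p : A × A, ‖U p.1 p.2‖ with hMbdef
  have hM0 : 0 ≤ Mb := Finset.sum_nonneg fun _ _ => norm_nonneg _
  have hMbd : ∀ a b : A, ‖U a b‖ ≤ Mb := fun a b =>
    Finset.single_le_sum (f := fun p : A × A => ‖U p.1 p.2‖)
      (fun _ _ => norm_nonneg _) (Finset.mem_univ (a, b))
  set B : ℝ := ∑ i, ‖d i‖ with hBdef
  have hB0 : 0 ≤ B := Finset.sum_nonneg fun _ _ => norm_nonneg _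
  have hBd : ∀ i, ‖d i‖ ≤ B := fun i =>
    Finset.single_le_sum (fun _ _ => norm_nonneg _) (Finset.mem_univ i)
  set K : ℝ := (Fintype.card A : ℝ) with hKdef
  have hK0 : 0 ≤ K := Nat.cast_nonneg _
  set Dd : ℝ := Mb * K + Mb + B + 2 with hDdef
  have hD0 : 0 < Dd := by positivity
  refine ⟨1 / Dd, by positivity, ?_⟩
  intro u hu R hR1 hR2
  have hu0 : 0 ≤ ‖u‖ := norm_nonneg u
  have hub : ‖u‖ * Dd < 1 := by
    rw [lt_div_iff₀ hD0] at hu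
    exact hu
  have hq1 : Mb * ‖u‖ < 1 := by
    nlinarith [mul_nonneg (mul_nonneg hM0 hK0) hu0, mul_nonneg hB0 hu0]
  have hqK : K * (Mb * ‖u‖) < 1 := by
    nlinarith [mul_nonneg hM0 hu0, mul_nonneg hB0 hu0]
  have hq0 : 0 ≤ Mb * ‖u‖ := mul_nonneg hM0 hu0
  have hud : ∀ i, ‖u * d i‖ < 1 := by
    intro i
    rw [norm_mul]
    calc ‖u‖ * ‖d i‖ ≤ ‖u‖ * B := mul_le_mul_of_nonneg_left (hBd i) hu0
      _ < 1 := by nlinarith [mul_nonneg (mul_nonneg hM0 hK0) hu0, mul_nonneg hM0 hu0]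
  have hwnorm : ∀ C : GraphCycle o t, ‖GraphCycle.weight U C‖ ≤ Mb ^ C.len := by
    intro C
    rw [GraphCycle.weight, norm_prod]
    calc (∏ i ∈ Finset.range C.len, ‖U (C.arcs i) (C.arcs (i + 1))‖)
        ≤ ∏ _i ∈ Finset.range C.len, Mb :=
          Finset.prod_le_prod (fun _ _ => norm_nonneg _) (fun i _ => hMbd _ _)
      _ = Mb ^ C.len := by rw [Finset.prod_const, Finset.card_range]
  have hwb : ∀ C : GraphCycle o t,
      ‖GraphCycle.weight U C * u ^ C.len‖ ≤ (Mb * ‖u‖) ^ C.len := by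
    intro C
    rw [norm_mul, norm_pow, mul_pow]
    exact mul_le_mul_of_nonneg_right (hwnorm C) (by positivity)
  have hwlt : ∀ C : GraphCycle o t, ‖GraphCycle.weight U C * u ^ C.len‖ < 1 := by
    intro C
    refine lt_of_le_of_lt (hwb C) ?_
    calc (Mb * ‖u‖) ^ C.len ≤ (Mb * ‖u‖) ^ 1 := pow_le_pow_of_le_one hq0 hq1.le C.pos
      _ = Mb * ‖u‖ := pow_one _
      _ < 1 := hq1
  -- summability of the walk sum
  have hnormW : ∀ w : WalkT A, ‖termW U u w‖ ≤ (Mb * ‖u‖) ^ (w.1 + 1) := by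
    rintro ⟨n, c⟩
    rw [termW]
    simp only
    rw [norm_div, norm_mul, norm_pow]
    have h1 : ‖wt U c‖ ≤ Mb ^ (n + 1) := wt_norm_le U hMbd c
    have h2 : (1 : ℝ) ≤ ‖((n + 1 : ℕ) : ℂ)‖ := by
      rw [Complex.norm_natCast]
      exact_mod_cast Nat.succ_le_succ (Nat.zero_le n)
    calc ‖u‖ ^ (n + 1) * ‖wt U c‖ / ‖((n + 1 : ℕ) : ℂ)‖
        ≤ ‖u‖ ^ (n + 1) * Mb ^ (n + 1) / 1 := by gcongr
      _ = (Mb * ‖u‖) ^ (n + 1) := by rw [div_one, mul_pow]; ring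
  have hsummW : Summable (termW U u) := by
    refine Summable.of_norm_bounded (g := fun w : WalkT A => (Mb * ‖u‖) ^ (w.1 + 1)) ?_ hnormW
    refine (summable_sigma_of_nonneg ?_).mpr ⟨?_, ?_⟩
    · intro x; positivity
    · intro n; exact (hasSum_fintype _).summable
    · have h0 : 0 ≤ K * (Mb * ‖u‖) := by positivity
      have hgeo := (summable_geometric_of_lt_one h0 hqK).mul_left (K * (Mb * ‖u‖))
      have hgeo2 : Summable (fun n : ℕ => (K * (Mb * ‖u‖)) ^ (n + 1)) :=
        hgeo.congr fun n => by rw [← pow_succ']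
      refine hgeo2.congr fun n => ?_
      have hconst : ∑' (_y : Fin (n + 1) → A), (Mb * ‖u‖) ^ (n + 1)
          = (K * (Mb * ‖u‖)) ^ (n + 1) := by
        rw [tsum_const, Nat.card_eq_fintype_card, Fintype.card_fun, Fintype.card_fin,
          nsmul_eq_mul, Nat.cast_pow, hKdef]
        ring
      exact hconst.symm
  set S : ℂ := ∑' w, termW U u w with hSdef
  have hW : HasSum (termW U u) S := hsummW.hasSum
  -- trace form
  have htrace : HasSum (fun n : ℕ => u ^ (n + 1) * (U ^ (n + 1)).trace / ((n + 1 : ℕ) : ℂ)) S := by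
    have h1 := hW.sigma (fun n => hasSum_fintype (fun c => termW U u ⟨n, c⟩))
    have h2 : ∀ n : ℕ, (∑ c : Fin (n + 1) → A, termW U u ⟨n, c⟩)
        = u ^ (n + 1) * (U ^ (n + 1)).trace / ((n + 1 : ℕ) : ℂ) := by
      intro n
      rw [trace_pow, Finset.mul_sum, Finset.sum_div]
      rfl
    simpa only [h2] using h1
  -- eigenvalue form
  have heig : HasSum (fun n : ℕ => u ^ (n + 1) * (U ^ (n + 1)).trace / ((n + 1 : ℕ) : ℂ))
      (∑ i, -(Complex.log (1 - u * d i))) := by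
    have h1 : ∀ i, HasSum (fun n : ℕ => (u * d i) ^ (n + 1) / ((n + 1 : ℕ) : ℂ))
        (-(Complex.log (1 - u * d i))) := fun i => hasSum_log_shift (hud i)
    have h2 := hasSum_sum (s := Finset.univ)
      (f := fun (i : Fin N) (n : ℕ) => (u * d i) ^ (n + 1) / ((n + 1 : ℕ) : ℂ))
      (a := fun i => -(Complex.log (1 - u * d i))) (fun i _ => h1 i)
    have h3 : ∀ n : ℕ, (∑ i, (u * d i) ^ (n + 1) / ((n + 1 : ℕ) : ℂ))
        = u ^ (n + 1) * (U ^ (n + 1)).trace / ((n + 1 : ℕ) : ℂ) := by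
      intro n
      rw [htr (n + 1) (Nat.succ_pos n), Finset.mul_sum, Finset.sum_div]
      refine Finset.sum_congr rfl fun i _ => ?_
      rw [mul_pow]
    simpa only [h3] using h2
  have hSval : S = ∑ i, -(Complex.log (1 - u * d i)) := htrace.unique heig
  -- transfer to the cycle-indexed sum
  have hIW : HasSum (termI U u R) S := by
    refine (hasSum_iff_hasSum_of_ne_zero_bij
      (f := termW U u) (g := termI U u R) (a := S)
      (fun x => fwd R x.1) ?_ ?_ ?_).mp hW
    · intro x y hxy
      exact Subtype.ext (fwd_injective hR1 hR2 hxy)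
    · rintro w hw
      obtain ⟨x, hx⟩ := fwd_surj (u := u) hU hR2 w hw
      have hxsupp : termI U u R x ≠ 0 := by
        rw [← termW_fwd, hx]
        exact hw
      exact ⟨⟨x, hxsupp⟩, hx⟩
    · intro x
      exact termW_fwd x.1
  have hbase : HasSum (fun p : ↥R × ℕ =>
      (GraphCycle.weight U (p.1 : GraphCycle o t) * u ^ (p.1 : GraphCycle o t).len) ^ (p.2 + 1)
        / ((p.2 + 1 : ℕ) : ℂ)) S := by
    have h1 := hIW.sigma (fun p => hasSum_fintype (fun k => termI U u R ⟨p, k⟩))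
    have h2 : ∀ p : ↥R × ℕ,
        (∑ _k : Fin (p.1 : GraphCycle o t).len, termI U u R ⟨p, _k⟩)
          = (GraphCycle.weight U (p.1 : GraphCycle o t)
              * u ^ (p.1 : GraphCycle o t).len) ^ (p.2 + 1) / ((p.2 + 1 : ℕ) : ℂ) := by
      intro p
      have hconst : ∀ _k : Fin (p.1 : GraphCycle o t).len, termI U u R ⟨p, _k⟩
          = (GraphCycle.weight U (p.1 : GraphCycle o t)
              * u ^ (p.1 : GraphCycle o t).len) ^ (p.2 + 1)
            / (((p.2 + 1) * (p.1 : GraphCycle o t).len : ℕ) : ℂ) := fun _ => rfl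
      rw [Finset.sum_congr rfl (fun k _ => hconst k), Finset.sum_const, Finset.card_univ,
        Fintype.card_fin, nsmul_eq_mul]
      have hl0 : (((p.1 : GraphCycle o t).len : ℕ) : ℂ) ≠ 0 :=
        Nat.cast_ne_zero.mpr (p.1 : GraphCycle o t).pos.ne'
      have hr0 : ((p.2 + 1 : ℕ) : ℂ) ≠ 0 := Nat.cast_ne_zero.mpr (Nat.succ_ne_zero _)
      push_cast at hl0 hr0 ⊢
      field_simp
    simpa only [h2] using h1
  have hRlog : HasSum (fun C : ↥R =>
      -(Complex.log (1 - GraphCycle.weight U (C : GraphCycle o t)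
        * u ^ (C : GraphCycle o t).len))) S := by
    refine hbase.prod_fiberwise fun C => ?_
    have h := hasSum_log_shift (hwlt (C : GraphCycle o t))
    convert h using 2 with r
  have hlogneg : HasSum (fun C : ↥R =>
      Complex.log (1 - GraphCycle.weight U (C : GraphCycle o t)
        * u ^ (C : GraphCycle o t).len)) (-S) := by
    simpa using hRlog.neg
  have hprod := hlogneg.cexp
  have hfun : (Complex.exp ∘ fun C : ↥R =>
      Complex.log (1 - GraphCycle.weight U (C : GraphCycle o t)
        * u ^ (C : GraphCycle o t).len))
      = fun C : ↥R => 1 - GraphCycle.weight U (C : GraphCycle o t)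
        * u ^ (C : GraphCycle o t).len := by
    funext C
    exact Complex.exp_log (one_sub_ne_zero (hwlt _))
  rw [hfun] at hprod
  have hval : Complex.exp (-S) = (1 - u • U).det := by
    have hns : -S = ∑ i, Complex.log (1 - u * d i) := by
      rw [hSval]
      simp
    rw [hns, Complex.exp_sum, hdet u]
    exact Finset.prod_congr rfl fun i _ => Complex.exp_log (one_sub_ne_zero (hud i))
  rw [hval] at hprod
  exact hprod
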